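/- In the setting of a conformal product structure on a reducible Riemannian manifold (S, P, θ as above with ∇P = 0 and ∇_X S = SX⊙θ♯ − Sθ♯⊙X), the function tr(SP) satisfies d(tr(SP)) = 2α(θ), where α = SP − PS is viewed as a skew-symmetric endomorphism acting on θ♯. -/

import Mathlib

open Finset

/-- In the setting of a conformal product structure on a reducible Riemannian manifold
(`S`, `P`, `θ` with `∇P = 0` and `∇_X S = SX⊙θ♯ − Sθ♯⊙X`), the function `tr(SP)` satisfies
`d(tr(SP)) = 2α(θ)`, where `α = SP − PS` is viewed as a skew-symmetric endomorphism acting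
on `θ♯`.

We model the geometry algebraically: `C` is the commutative ℝ-algebra of smooth functions,
`VF` the `C`-module of vector fields, `act` the derivation action (so `d f (X) = act X f`),
`g` the metric, `conn` the Levi-Civita connection, `θs = θ♯`, and `e : ι → VF` a (local)
orthonormal frame, so that `tr(F) = Σᵢ g(F eᵢ, eᵢ)` and 1-forms are identified with vector
fields via `g`. -/
theorem d_trace_SP {C VF : Type*} [CommRing C] [Algebra ℝ C]
    [AddCommGroup VF] [Module C VF]
    (act : VF → C → C) (bracket : VF → VF → VF)
    (g : VF →ₗ[C] VF →ₗ[C] C) (conn : VF → VF → VF)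
    (gsymm : ∀ X Y : VF, g X Y = g Y X)
    (act_add : ∀ (X : VF) (f h : C), act X (f + h) = act X f + act X h)
    (act_mul : ∀ (X : VF) (f h : C), act X (f * h) = f * act X h + h * act X f)
    (act_const : ∀ (X : VF) (c : ℝ), act X (algebraMap ℝ C c) = 0)
    (conn_addY : ∀ X Y Z : VF, conn X (Y + Z) = conn X Y + conn X Z)
    (conn_smulY : ∀ (X : VF) (f : C) (Y : VF), conn X (f • Y) = act X f • Y + f • conn X Y)
    (torsion_free : ∀ X Y : VF, conn X Y - conn Y X = bracket X Y)
    (conn_metric : ∀ X Y Z : VF, act X (g Y Z) = g (conn X Y) Z + g Y (conn X Z))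
    (θs : VF) (S P : VF →ₗ[C] VF)
    (hSsym : ∀ X Y : VF, g (S X) Y = g X (S Y)) (hSinv : ∀ X : VF, S (S X) = X)
    (hPsym : ∀ X Y : VF, g (P X) Y = g X (P Y)) (hPinv : ∀ X : VF, P (P X) = X)
    (hPpar : ∀ X Y : VF, conn X (P Y) = P (conn X Y))
    (hSder : ∀ X Y : VF, conn X (S Y) - S (conn X Y) =
      g (S X) Y • θs + g θs Y • S X - g (S θs) Y • X - g X Y • S θs)
    {ι : Type*} [Fintype ι] [DecidableEq ι] (e : ι → VF)
    (horth : ∀ i j, g (e i) (e j) = if i = j then 1 else 0)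
    (hexp : ∀ X : VF, X = ∑ i, g X (e i) • e i) :
    ∀ X : VF, act X (∑ i, g (S (P (e i))) (e i)) =
      2 * g (S (P θs) - P (S θs)) X := by
  intro X
  classical
  -- expansion of inner product over the orthonormal frame
  have gsum : ∀ Y Z : VF, g Y Z = ∑ i, g Z (e i) * g Y (e i) := by
    intro Y Z
    conv_lhs => rw [hexp Z]
    simp [smul_eq_mul, mul_comm]
  -- act X of a sum
  have act_zero : act X (0 : C) = 0 := by
    simpa using act_const X 0
  have act_sum : ∀ f : ι → C,
      act X (∑ i, f i) = ∑ i, act X (f i) := by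
    intro f
    induction (Finset.univ : Finset ι) using Finset.induction with
    | empty => simpa using act_zero
    | insert _ _ h ih => rw [Finset.sum_insert h, act_add, ih, Finset.sum_insert h]
  -- skew-symmetry of connection coefficients
  have skew : ∀ i j, g (conn X (e i)) (e j) = - g (conn X (e j)) (e i) := by
    intro i j
    have h1 := conn_metric X (e i) (e j)
    rw [horth] at h1
    have h0 : act X ((if i = j then 1 else 0 : C)) = 0 := by
      split_ifs
      · simpa using act_const X 1
      · simpa using act_const X 0
    rw [h0] at h1
    have h2 : g (e i) (conn X (e j)) = g (conn X (e j)) (e i) := gsymm _ _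
    linear_combination -h1 - h2
  -- the key per-term computation
  have key : ∀ i, act X (g (S (P (e i))) (e i)) =
      (g (S (P (conn X (e i)))) (e i) + g (S (P (e i))) (conn X (e i)))
      + (g (S X) (P (e i)) * g θs (e i) + g θs (P (e i)) * g (S X) (e i)
        - g (S θs) (P (e i)) * g X (e i) - g X (P (e i)) * g (S θs) (e i)) := by
    intro i
    have h1 := conn_metric X (S (P (e i))) (e i)
    have h2 := hSder X (P (e i))
    have h4 : conn X (S (P (e i))) = S (P (conn X (e i)))
        + (g (S X) (P (e i)) • θs + g θs (P (e i)) • S X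
          - g (S θs) (P (e i)) • X - g X (P (e i)) • S θs) := by
      have h5 := sub_eq_iff_eq_add.mp h2
      rw [hPpar X (e i)] at h5
      rw [h5]; abel
    rw [h1, h4]
    simp only [map_add, map_sub, map_smul, LinearMap.add_apply, LinearMap.sub_apply,
      LinearMap.smul_apply, smul_eq_mul]
    ring
  rw [act_sum, Finset.sum_congr rfl (fun i _ => key i), Finset.sum_add_distrib]
  -- the connection terms cancel
  have part1 : ∑ i, (g (S (P (conn X (e i)))) (e i) + g (S (P (e i))) (conn X (e i))) = 0 := by
    have hterm : ∀ i, g (S (P (conn X (e i)))) (e i) + g (S (P (e i))) (conn X (e i))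
        = ∑ j, (g (P (S (e i))) (e j) * g (conn X (e i)) (e j)
              - g (P (S (e j))) (e i) * g (conn X (e j)) (e i)) := by
      intro i
      have e1 : g (S (P (conn X (e i)))) (e i)
          = ∑ j, g (P (S (e i))) (e j) * g (conn X (e i)) (e j) := by
        rw [hSsym, hPsym, gsum]
      have e2 : g (S (P (e i))) (conn X (e i))
          = ∑ j, -(g (P (S (e j))) (e i) * g (conn X (e j)) (e i)) := by
        rw [gsum]
        refine Finset.sum_congr rfl (fun j _ => ?_)
        have hB : g (S (P (e i))) (e j) = g (P (S (e j))) (e i) := by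
          rw [hSsym, hPsym, gsymm]
        rw [hB, skew i j]
        ring
      rw [e1, e2, ← Finset.sum_add_distrib]
      exact Finset.sum_congr rfl (fun j _ => by ring)
    rw [Finset.sum_congr rfl (fun i _ => hterm i)]
    rw [Finset.sum_congr rfl (fun i _ => Finset.sum_sub_distrib _ _), Finset.sum_sub_distrib]
    exact sub_eq_zero.mpr Finset.sum_comm
  rw [part1, zero_add]
  -- the remaining algebraic terms
  have prods : ∀ Y Z : VF, (∑ i, g Y (e i) * g Z (e i)) = g Z Y := by
    intro Y Z
    exact (gsum Z Y).symm
  have hrw : ∀ i, (g (S X) (P (e i)) * g θs (e i) + g θs (P (e i)) * g (S X) (e i)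
        - g (S θs) (P (e i)) * g X (e i) - g X (P (e i)) * g (S θs) (e i))
      = (g (P (S X)) (e i) * g θs (e i) + g (P θs) (e i) * g (S X) (e i)
        - g (P (S θs)) (e i) * g X (e i) - g (P X) (e i) * g (S θs) (e i)) := by
    intro i
    rw [hPsym (S X), hPsym θs, hPsym (S θs), hPsym X]
  rw [Finset.sum_congr rfl (fun i _ => hrw i)]
  have hsplit : ∑ i, (g (P (S X)) (e i) * g θs (e i) + g (P θs) (e i) * g (S X) (e i)
        - g (P (S θs)) (e i) * g X (e i) - g (P X) (e i) * g (S θs) (e i))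
      = g θs (P (S X)) + g (S X) (P θs) - g X (P (S θs)) - g (S θs) (P X) := by
    rw [← prods (P (S X)) θs, ← prods (P θs) (S X), ← prods (P (S θs)) X, ← prods (P X) (S θs)]
    rw [← Finset.sum_add_distrib, ← Finset.sum_sub_distrib, ← Finset.sum_sub_distrib]
  rw [hsplit]
  have a1 : g θs (P (S X)) = g (S (P θs)) X := by
    rw [← hPsym, ← hSsym]
  have a2 : g (S X) (P θs) = g (S (P θs)) X := by
    rw [hSsym, gsymm]
  have a3 : g X (P (S θs)) = g (P (S θs)) X := gsymm _ _
  have a4 : g (S θs) (P X) = g (P (S θs)) X := by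
    rw [← hPsym]
  rw [a1, a2, a3, a4, map_sub, LinearMap.sub_apply]
  ring
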